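/- Let Π₊, Π₋, Π be three symmetric bilinear forms on a 2-dimensional real vector space that are pairwise apolar (orthogonal for the discriminant form) and all nonzero. If none of them is degenerate, then exactly one of them is definite and the other two are indefinite. If one of them has rank 1, say equal to ±ℓ² for a nonzero linear form ℓ, then the other two are divisible by ℓ and at least one of them is proportional to ℓ². -/

import Mathlib

section

variable {T : Type} [AddCommGroup T] [Module ℝ T]

/-- Apolarity (orthogonality for the discriminant form) of two symmetric bilinear forms. -/
def IsApolar (B B' : T →ₗ[ℝ] T →ₗ[ℝ] ℝ) : Prop :=
  ∀ X Y : T, B X X * B' Y Y + B Y Y * B' X X = 2 * (B X Y * B' X Y)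

/-- A definite form: `B(x,x)` has a fixed sign on nonzero vectors. -/
def IsDefinite (B : T →ₗ[ℝ] T →ₗ[ℝ] ℝ) : Prop :=
  (∀ x : T, x ≠ 0 → 0 < B x x) ∨ (∀ x : T, x ≠ 0 → B x x < 0)

/-- An indefinite form: `B(x,x)` takes both signs. -/
def IsIndefinite (B : T →ₗ[ℝ] T →ₗ[ℝ] ℝ) : Prop :=
  (∃ x : T, 0 < B x x) ∧ (∃ y : T, B y y < 0)

/-- Nondegeneracy. -/
def IsNondeg (B : T →ₗ[ℝ] T →ₗ[ℝ] ℝ) : Prop :=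
  ∀ x : T, (∀ y : T, B x y = 0) → x = 0

/-- `B = ±ℓ²` for the linear form `ℓ`. -/
def IsPMSquare (ℓ : T →ₗ[ℝ] ℝ) (B : T →ₗ[ℝ] T →ₗ[ℝ] ℝ) : Prop :=
  (∀ x y : T, B x y = ℓ x * ℓ y) ∨ (∀ x y : T, B x y = -(ℓ x * ℓ y))

/-- `B` is divisible by the linear form `ℓ`. -/
def IsDivisibleBy (ℓ : T →ₗ[ℝ] ℝ) (B : T →ₗ[ℝ] T →ₗ[ℝ] ℝ) : Prop :=
  ∃ m : T →ₗ[ℝ] ℝ, ∀ x y : T, B x y = (ℓ x * m y + ℓ y * m x) / 2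

/-- `B` is proportional to `ℓ²`. -/
def IsProportionalToSquare (ℓ : T →ₗ[ℝ] ℝ) (B : T →ₗ[ℝ] T →ₗ[ℝ] ℝ) : Prop :=
  ∃ c : ℝ, ∀ x y : T, B x y = c * (ℓ x * ℓ y)

end

section MyAux

variable {T : Type} [AddCommGroup T] [Module ℝ T]

private lemma my_bilin_expand (Bb : T →ₗ[ℝ] T →ₗ[ℝ] ℝ) (hs : ∀ X Y : T, Bb X Y = Bb Y X)
    (e0 e1 : T) (u v s t : ℝ) :
    Bb (u • e0 + v • e1) (s • e0 + t • e1)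
      = u*s*(Bb e0 e0) + (u*t+v*s)*(Bb e0 e1) + v*t*(Bb e1 e1) := by
  simp only [map_add, map_smul, LinearMap.add_apply, LinearMap.smul_apply, smul_eq_mul]
  rw [hs e1 e0]; ring

private lemma my_quad_pos {a b c u v : ℝ} (hd : 0 < a*c - b^2) (ha : 0 < a)
    (h : ¬(u = 0 ∧ v = 0)) : 0 < u*u*a + (u*v+v*u)*b + v*v*c := by
  by_cases hv : v = 0
  · have hu : u ≠ 0 := fun hu => h ⟨hu, hv⟩
    have : 0 < u^2 := by positivity
    subst hv; nlinarith
  · have hv2 : 0 < v^2 := by positivity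
    nlinarith [sq_nonneg (a*u+b*v), mul_pos hd hv2]

private lemma my_definite (bas : Module.Basis (Fin 2) ℝ T) (Bb : T →ₗ[ℝ] T →ₗ[ℝ] ℝ)
    (hs : ∀ X Y : T, Bb X Y = Bb Y X)
    (h : 0 < Bb (bas 0) (bas 0) * Bb (bas 1) (bas 1) - Bb (bas 0) (bas 1) ^ 2) :
    IsDefinite Bb := by
  have key : ∀ x : T, x ≠ 0 → ¬(bas.repr x 0 = 0 ∧ bas.repr x 1 = 0) := by
    rintro x hx ⟨h0, h1⟩
    apply hx
    have hh := bas.sum_repr x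
    rw [Fin.sum_univ_two, h0, h1] at hh
    simpa using hh.symm
  have hrepr : ∀ x : T, Bb x x = (bas.repr x 0)*(bas.repr x 0)*(Bb (bas 0) (bas 0))
      + ((bas.repr x 0)*(bas.repr x 1)+(bas.repr x 1)*(bas.repr x 0))*(Bb (bas 0) (bas 1))
      + (bas.repr x 1)*(bas.repr x 1)*(Bb (bas 1) (bas 1)) := by
    intro x
    have hh : x = bas.repr x 0 • bas 0 + bas.repr x 1 • bas 1 := by
      have := bas.sum_repr x
      rw [Fin.sum_univ_two] at this
      exact this.symm
    conv_lhs => rw [hh]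
    rw [my_bilin_expand Bb hs]
  rcases lt_or_gt_of_ne (show Bb (bas 0) (bas 0) ≠ 0 by intro h0; rw [h0] at h; nlinarith [sq_nonneg (Bb (bas 0) (bas 1))]) with ha | ha
  · right
    intro x hx
    rw [hrepr x]
    have := my_quad_pos (a := -(Bb (bas 0) (bas 0))) (b := -(Bb (bas 0) (bas 1)))
      (c := -(Bb (bas 1) (bas 1))) (u := bas.repr x 0) (v := bas.repr x 1)
      (by nlinarith) (by linarith) (key x hx)
    nlinarith
  · left
    intro x hx
    rw [hrepr x]
    exact my_quad_pos h ha (key x hx)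

private lemma my_indefinite (bas : Module.Basis (Fin 2) ℝ T) (Bb : T →ₗ[ℝ] T →ₗ[ℝ] ℝ)
    (hs : ∀ X Y : T, Bb X Y = Bb Y X)
    (h : Bb (bas 0) (bas 0) * Bb (bas 1) (bas 1) - Bb (bas 0) (bas 1) ^ 2 < 0) :
    IsIndefinite Bb := by
  set a := Bb (bas 0) (bas 0) with hA
  set b := Bb (bas 0) (bas 1) with hB
  set c := Bb (bas 1) (bas 1) with hC
  rcases lt_trichotomy a 0 with ha | ha | ha
  · constructor
    · refine ⟨b • bas 0 + (-a) • bas 1, ?_⟩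
      rw [my_bilin_expand Bb hs, ← hA, ← hB, ← hC]
      nlinarith
    · refine ⟨(1:ℝ) • bas 0 + (0:ℝ) • bas 1, ?_⟩
      rw [my_bilin_expand Bb hs, ← hA, ← hB, ← hC]
      nlinarith
  · have hb : b ≠ 0 := by intro h0; rw [h0, ha] at h; simp at h
    constructor
    · refine ⟨((1-c)/(2*b)) • bas 0 + (1:ℝ) • bas 1, ?_⟩
      rw [my_bilin_expand Bb hs, ← hA, ← hB, ← hC, ← ha]
      have : ((1-c)/(2*b)*1 + 1*((1-c)/(2*b)))*b = 1 - c := by field_simp; ring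
      nlinarith [this]
    · refine ⟨((-1-c)/(2*b)) • bas 0 + (1:ℝ) • bas 1, ?_⟩
      rw [my_bilin_expand Bb hs, ← hA, ← hB, ← hC, ← ha]
      have : ((-1-c)/(2*b)*1 + 1*((-1-c)/(2*b)))*b = -1 - c := by field_simp; ring
      nlinarith [this]
  · constructor
    · refine ⟨(1:ℝ) • bas 0 + (0:ℝ) • bas 1, ?_⟩
      rw [my_bilin_expand Bb hs, ← hA, ← hB, ← hC]
      nlinarith
    · refine ⟨b • bas 0 + (-a) • bas 1, ?_⟩
      rw [my_bilin_expand Bb hs, ← hA, ← hB, ← hC]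
      nlinarith

private lemma my_disc_ne (bas : Module.Basis (Fin 2) ℝ T) (Bb : T →ₗ[ℝ] T →ₗ[ℝ] ℝ)
    (hs : ∀ X Y : T, Bb X Y = Bb Y X) (hnd : IsNondeg Bb) :
    Bb (bas 0) (bas 0) * Bb (bas 1) (bas 1) - Bb (bas 0) (bas 1) ^ 2 ≠ 0 := by
  set a := Bb (bas 0) (bas 0) with hA
  set b := Bb (bas 0) (bas 1) with hB
  set c := Bb (bas 1) (bas 1) with hC
  intro h
  have hrepr : ∀ y : T, y = bas.repr y 0 • bas 0 + bas.repr y 1 • bas 1 := by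
    intro y
    have := bas.sum_repr y
    rw [Fin.sum_univ_two] at this
    exact this.symm
  have hz : ∀ y : T, Bb (c • bas 0 + (-b) • bas 1) y = 0 := by
    intro y
    conv_lhs => rw [hrepr y]
    rw [my_bilin_expand Bb hs, ← hA, ← hB, ← hC]
    linear_combination (bas.repr y 0) * h
  have hz0 := hnd _ hz
  have hc0 : c = 0 := by
    have := congrArg (bas.coord 0) hz0
    simpa [Module.Basis.coord_apply, Module.Basis.repr_self, Finsupp.single_apply] using this
  have hb0 : b = 0 := by
    have := congrArg (bas.coord 1) hz0
    have h2 : -b = 0 := by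
      simpa [Module.Basis.coord_apply, Module.Basis.repr_self, Finsupp.single_apply] using this
    linarith
  have hz2 : ∀ y : T, Bb (bas 1) y = 0 := by
    intro y
    conv_lhs => rw [show bas 1 = (0:ℝ) • bas 0 + (1:ℝ) • bas 1 by simp, hrepr y]
    rw [my_bilin_expand Bb hs, ← hA, ← hB, ← hC, hb0, hc0]
    ring
  exact bas.ne_zero 1 (hnd _ hz2)

private lemma my_lorentz (a b c : Fin 3 → ℝ)
    (hrel : ∀ i j : Fin 3, i ≠ j → a i * c j + a j * c i = 2 * (b i * b j))
    (hq : ∀ i, a i * c i - b i ^ 2 ≠ 0) :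
    ∃ i, (0 < a i * c i - b i ^ 2) ∧ ∀ j, j ≠ i → a j * c j - b j ^ 2 < 0 := by
  have hpair : ∀ i j : Fin 3, i ≠ j → 0 < a i * c i - b i ^ 2 → 0 < a j * c j - b j ^ 2 → False := by
    intro i j hij h1 h2
    have hr := hrel i j hij
    have h3 : 0 < a i * c i := by nlinarith [sq_nonneg (b i)]
    have h4 : 0 < a j * c j := by nlinarith [sq_nonneg (b j)]
    have h5 : (b i)^2 * (b j)^2 < (a i * c i) * (a j * c j) := by
      nlinarith [mul_pos h1 h2, mul_nonneg (sq_nonneg (b i)) h2.le,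
        mul_nonneg (sq_nonneg (b j)) h1.le]
    have h6 : (a i * c j + a j * c i)^2 = 4*((b i)^2*(b j)^2) := by rw [hr]; ring
    nlinarith [h6, h5, sq_nonneg (a i * c j - a j * c i)]
  have hdet : 4*((a 0 * c 0 - (b 0)^2)*(a 1 * c 1 - (b 1)^2)*(a 2 * c 2 - (b 2)^2))
      = ((a 0)*((b 1)*(c 2) - (b 2)*(c 1)) - (b 0)*((a 1)*(c 2) - (a 2)*(c 1))
        + (c 0)*((a 1)*(b 2) - (a 2)*(b 1)))^2 := by
    have h01 := hrel 0 1 (by decide)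
    have h02 := hrel 0 2 (by decide)
    have h12 := hrel 1 2 (by decide)
    linear_combination
      ((-1)*(c 0)*(a 1)*(b 2)*(b 2) + (2)*(c 0)*(a 1)*(a 2)*(c 2) + (2)*(b 0)*(b 1)*(b 2)*(b 2) + (-2)*(b 0)*(b 1)*(a 2)*(c 2) + (-2)*(b 0)*(a 1)*(b 2)*(c 2) + (-1)*(a 0)*(c 1)*(b 2)*(b 2) + (2)*(a 0)*(b 1)*(b 2)*(c 2)) * h01
      + ((-1)*(c 0)*(b 1)*(b 1)*(a 2) + (2)*(c 0)*(a 1)*(b 1)*(b 2) + (-2)*(c 0)*(a 1)*(a 1)*(c 2) + (2)*(b 0)*(b 1)*(b 1)*(b 2) + (-2)*(b 0)*(a 1)*(c 1)*(b 2) + (2)*(b 0)*(a 1)*(b 1)*(c 2) + (-1)*(a 0)*(b 1)*(b 1)*(c 2)) * h02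
      + ((2)*(b 0)*(c 0)*(b 1)*(a 2) + (-1)*(b 0)*(b 0)*(c 1)*(a 2) + (-2)*(b 0)*(b 0)*(b 1)*(b 2) + (-1)*(b 0)*(b 0)*(a 1)*(c 2) + (-2)*(a 0)*(c 0)*(b 1)*(b 2) + (2)*(a 0)*(c 0)*(a 1)*(c 2) + (2)*(a 0)*(b 0)*(c 1)*(b 2)) * h12
  have hex : ∃ i, 0 < a i * c i - b i ^ 2 := by
    by_contra hno
    push_neg at hno
    have h0 : a 0 * c 0 - b 0 ^ 2 < 0 := (hno 0).lt_of_ne (hq 0)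
    have h1 : a 1 * c 1 - b 1 ^ 2 < 0 := (hno 1).lt_of_ne (hq 1)
    have h2 : a 2 * c 2 - b 2 ^ 2 < 0 := (hno 2).lt_of_ne (hq 2)
    nlinarith [hdet, sq_nonneg ((a 0)*((b 1)*(c 2) - (b 2)*(c 1)) - (b 0)*((a 1)*(c 2) - (a 2)*(c 1)) + (c 0)*((a 1)*(b 2) - (a 2)*(b 1))), mul_pos_of_neg_of_neg h0 h1]
  obtain ⟨i, hi⟩ := hex
  refine ⟨i, hi, fun j hj => ?_⟩
  rcases (hq j).lt_or_gt with h | h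
  · exact h
  · exact absurd (hpair i j (Ne.symm hj) hi h) (fun x => x)

end MyAux

/-- three pairwise apolar nonzero symmetric bilinear forms on a
2-dimensional real vector space: if all are nondegenerate then exactly one is definite and
the other two are indefinite; if one of them equals `±ℓ²` with `ℓ ≠ 0`, then the other two
are divisible by `ℓ` and at least one of them is proportional to `ℓ²`. -/
theorem darboux_stmt18
    (T : Type) [AddCommGroup T] [Module ℝ T] (hdim : Module.finrank ℝ T = 2)
    (B : Fin 3 → (T →ₗ[ℝ] T →ₗ[ℝ] ℝ))
    (hsym : ∀ i, ∀ X Y : T, B i X Y = B i Y X)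
    (hne : ∀ i, B i ≠ 0)
    (hapolar : ∀ i j, i ≠ j → IsApolar (B i) (B j)) :
    ((∀ i, IsNondeg (B i)) →
      ∃ i, IsDefinite (B i) ∧ ∀ j, j ≠ i → IsIndefinite (B j)) ∧
    (∀ (i : Fin 3) (ℓ : T →ₗ[ℝ] ℝ), ℓ ≠ 0 → IsPMSquare ℓ (B i) →
      (∀ j, j ≠ i → IsDivisibleBy ℓ (B j)) ∧
      ∃ j, j ≠ i ∧ IsProportionalToSquare ℓ (B j)) := by
  haveI : Module.Finite ℝ T := Module.finite_of_finrank_pos (by rw [hdim]; norm_num)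
  constructor
  · -- Part 1
    intro hnd
    let bas : Module.Basis (Fin 2) ℝ T := Module.finBasisOfFinrankEq ℝ T hdim
    have hrel : ∀ i j : Fin 3, i ≠ j →
        (B i (bas 0) (bas 0)) * (B j (bas 1) (bas 1))
          + (B j (bas 0) (bas 0)) * (B i (bas 1) (bas 1))
          = 2 * ((B i (bas 0) (bas 1)) * (B j (bas 0) (bas 1))) := by
      intro i j hij
      have h := hapolar i j hij (bas 0) (bas 1)
      linear_combination h
    obtain ⟨i, hi, hrest⟩ := my_lorentz (fun i => B i (bas 0) (bas 0))
      (fun i => B i (bas 0) (bas 1)) (fun i => B i (bas 1) (bas 1)) hrel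
      (fun i => my_disc_ne bas (B i) (hsym i) (hnd i))
    exact ⟨i, my_definite bas (B i) (hsym i) hi,
      fun j hj => my_indefinite bas (B j) (hsym j) (hrest j hj)⟩
  · -- Part 2
    intro i ℓ hℓ hsq
    obtain ⟨v, hv⟩ : ∃ v, ℓ v ≠ 0 := by
      by_contra h
      push_neg at h
      exact hℓ (by ext v; simp [h v])
    set e0 : T := (ℓ v)⁻¹ • v with he0
    have hle0 : ℓ e0 = 1 := by
      rw [he0, map_smul, smul_eq_mul, inv_mul_cancel₀ hv]
    have hker : ∀ j, j ≠ i → ∀ z : T, ℓ z = 0 → B j z z = 0 := by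
      intro j hj z hz
      have h := hapolar j i hj e0 z
      rcases hsq with h1 | h1 <;>
        (simp only [h1, hz, hle0, mul_zero, zero_mul, mul_one, one_mul, neg_zero,
          mul_neg, neg_neg] at h; linarith)
    have hker2 : ∀ j, j ≠ i → ∀ z w : T, ℓ z = 0 → ℓ w = 0 → B j z w = 0 := by
      intro j hj z w hz hw
      have h1 := hker j hj z hz
      have h2 := hker j hj w hw
      have h3 := hker j hj (z + w) (by rw [map_add, hz, hw, add_zero])
      have h4 : B j z w = B j w z := hsym j z w
      simp only [map_add, LinearMap.add_apply] at h3
      linarith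
    have hdiv : ∀ j, j ≠ i → ∃ m : T →ₗ[ℝ] ℝ, ∀ x y : T,
        B j x y = (ℓ x * m y + ℓ y * m x) / 2 := by
      intro j hj
      refine ⟨(2:ℝ) • (B j e0) - (B j e0 e0) • ℓ, fun x y => ?_⟩
      have hx0 : ℓ (x - ℓ x • e0) = 0 := by
        rw [map_sub, map_smul, smul_eq_mul, hle0, mul_one, sub_self]
      have hy0 : ℓ (y - ℓ y • e0) = 0 := by
        rw [map_sub, map_smul, smul_eq_mul, hle0, mul_one, sub_self]
      have hz := hker2 j hj _ _ hx0 hy0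
      have key : B j x y = ℓ x * ℓ y * B j e0 e0 + ℓ x * B j e0 (y - ℓ y • e0)
          + ℓ y * B j e0 (x - ℓ x • e0) := by
        conv_lhs => rw [show x = (x - ℓ x • e0) + ℓ x • e0 by abel,
          show y = (y - ℓ y • e0) + ℓ y • e0 by abel]
        simp only [map_add, LinearMap.add_apply, map_smul, LinearMap.smul_apply, smul_eq_mul]
        rw [hz, hsym j (x - ℓ x • e0) e0]
        ring
      rw [key]
      simp only [LinearMap.sub_apply, LinearMap.smul_apply, smul_eq_mul, map_sub, map_smul]
      ring
    have hii : ∀ w : Fin 3, w + 1 ≠ w ∧ w + 2 ≠ w ∧ w + 1 ≠ w + 2 := by decide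
    obtain ⟨hii1, hii2, hii12⟩ := hii i
    obtain ⟨m1, hm1⟩ := hdiv (i + 1) hii1
    obtain ⟨m2, hm2⟩ := hdiv (i + 2) hii2
    refine ⟨fun j hj => hdiv j hj, ?_⟩
    have hprod : ∀ X Y : T,
        (ℓ X * m1 Y - ℓ Y * m1 X) * (ℓ X * m2 Y - ℓ Y * m2 X) = 0 := by
      intro X Y
      have h := hapolar (i + 1) (i + 2) hii12 X Y
      rw [hm1 X X, hm1 Y Y, hm1 X Y, hm2 X X, hm2 Y Y, hm2 X Y] at h
      linear_combination (-2) * h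
    by_cases hcase : ∀ Y : T, m2 Y = m2 e0 * ℓ Y
    · exact ⟨i + 2, hii2, m2 e0, fun x y => by rw [hm2 x y, hcase x, hcase y]; ring⟩
    · push_neg at hcase
      obtain ⟨Y0, hY0⟩ := hcase
      have hD2 : m2 Y0 - ℓ Y0 * m2 e0 ≠ 0 := by
        intro h
        exact hY0 (by linear_combination h)
      have h10 : m1 Y0 = m1 e0 * ℓ Y0 := by
        have h := (mul_eq_zero.mp (hprod e0 Y0)).resolve_right (by
          rw [hle0, one_mul]
          exact hD2)
        rw [hle0, one_mul] at h
        linear_combination h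
      have hli : LinearIndependent ℝ ![e0, Y0] := by
        rw [LinearIndependent.pair_iff]
        intro s t hst
        have h1 : ℓ (s • e0 + t • Y0) = 0 := by rw [hst, map_zero]
        have h2 : m2 (s • e0 + t • Y0) = 0 := by rw [hst, map_zero]
        simp only [map_add, map_smul, smul_eq_mul, hle0, mul_one] at h1 h2
        have h3 : t * (m2 Y0 - ℓ Y0 * m2 e0) = 0 := by linear_combination h2 - m2 e0 * h1
        have ht : t = 0 := (mul_eq_zero.mp h3).resolve_right hD2
        constructor
        · rw [ht] at h1; linarith
        · exact ht
      let bas2 := basisOfLinearIndependentOfCardEqFinrank hli (by simp [hdim])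
      have hb2 : ⇑bas2 = ![e0, Y0] := coe_basisOfLinearIndependentOfCardEqFinrank _ _
      have hb20 : bas2 0 = e0 := by rw [hb2]; rfl
      have hb21 : bas2 1 = Y0 := by rw [hb2]; rfl
      have hspan : ∀ Y : T, ∃ s t : ℝ, Y = s • e0 + t • Y0 := by
        intro Y
        refine ⟨bas2.repr Y 0, bas2.repr Y 1, ?_⟩
        have h := bas2.sum_repr Y
        rw [Fin.sum_univ_two, hb20, hb21] at h
        exact h.symm
      have h1all : ∀ Y : T, m1 Y = m1 e0 * ℓ Y := by
        intro Y
        obtain ⟨s, t, rfl⟩ := hspan Y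
        simp only [map_add, map_smul, smul_eq_mul, hle0, mul_one]
        rw [h10]
        ring
      exact ⟨i + 1, hii1, m1 e0, fun x y => by rw [hm1 x y, h1all x, h1all y]; ring⟩
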